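/- Let Ω be a compact metric space with a finite Borel measure μ, k : Ω × Ω → ℝ continuous, x₁, …, xₙ ∈ Ω with invertible Gram matrix G_{ij} = k(x_i, x_j), f : Ω → ℝ continuous, Y = (f(x₁), …, f(xₙ)), and S(g)(x) := g(x) + Σᵢ,ⱼ k(x, xᵢ)(G⁻¹)_{ij}(Yⱼ − g(xⱼ)) for continuous g : Ω → ℝ. Let (Ω', ℱ, P) be a probability space and W : Ω' → C(Ω, ℝ) a Bochner-integrable random continuous function with E[W] = 0 and E[‖W‖_∞²] < ∞. Then the expected generalization error with random initial output is at least that with zero initial output: E[‖S(W) − f‖²_{L²(μ)}] ≥ ‖S(0) − f‖²_{L²(μ)}, with equality if and only if W(ω) − Σᵢ,ⱼ k(·, xᵢ)(G⁻¹)_{ij} W(ω)(xⱼ) = 0 in L²(μ) for P-almost every ω. -/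

import Mathlib

open Matrix MeasureTheory

set_option maxHeartbeats 1000000

/-- Harm of a random nonzero initial output in the NTK regime: for the trained output
`S(g) = g + k(·,X)G⁻¹(Y - g(X))` and `T(g) = k(·,X)G⁻¹ g(X)`, a Bochner-mean-zero
random continuous initial output `W` satisfies
`E‖S(W) - f‖²_{L²(μ)} ≥ ‖S(0) - f‖²_{L²(μ)}`, with equality if and only if
`W(ω) - T(W(ω)) = 0` in `L²(μ)` for `P`-almost every `ω`. -/
theorem stmt17 {Ω : Type*} [MetricSpace Ω] [CompactSpace Ω]
    [MeasurableSpace Ω] [BorelSpace Ω]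
    (μ : Measure Ω) [IsFiniteMeasure μ]
    {n : ℕ} (k : Ω → Ω → ℝ)
    (hk : Continuous fun p : Ω × Ω => k p.1 p.2)
    (x : Fin n → Ω)
    (G : Matrix (Fin n) (Fin n) ℝ) (hG : ∀ i j, G i j = k (x i) (x j))
    (hGinv : IsUnit G)
    (f : Ω → ℝ) (hf : Continuous f)
    (S T : C(Ω, ℝ) → Ω → ℝ)
    (hS : ∀ (g : C(Ω, ℝ)) (x' : Ω),
      S g x' = g x' + ∑ i, ∑ j, k x' (x i) * G⁻¹ i j * (f (x j) - g (x j)))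
    (hT : ∀ (g : C(Ω, ℝ)) (x' : Ω),
      T g x' = ∑ i, ∑ j, k x' (x i) * G⁻¹ i j * g (x j))
    {Ω' : Type*} [MeasurableSpace Ω']
    (P : Measure Ω') [IsProbabilityMeasure P]
    (W : Ω' → C(Ω, ℝ)) (hWint : Integrable W P)
    (hWmean : (∫ ω, W ω ∂P) = 0)
    (hWsq : Integrable (fun ω => ‖W ω‖ ^ 2) P) :
    (∫ x', (S 0 x' - f x') ^ 2 ∂μ)
      ≤ (∫ ω, (∫ x', (S (W ω) x' - f x') ^ 2 ∂μ) ∂P) ∧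
    ((∫ ω, (∫ x', (S (W ω) x' - f x') ^ 2 ∂μ) ∂P)
        = (∫ x', (S 0 x' - f x') ^ 2 ∂μ) ↔
      ∀ᵐ ω ∂P, (∫ x', (W ω x' - T (W ω) x') ^ 2 ∂μ) = 0) := by
  classical
  have hκ : ∀ i : Fin n, Continuous fun x' : Ω => k x' (x i) := fun i =>
    hk.comp (continuous_id.prodMk continuous_const)
  set κ : Fin n → C(Ω, ℝ) := fun i => ⟨fun x' => k x' (x i), hκ i⟩ with hκdef
  -- the linear version of T
  set Tl : C(Ω, ℝ) →L[ℝ] C(Ω, ℝ) :=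
    ∑ i, ∑ j, G⁻¹ i j • ((ContinuousMap.evalCLM ℝ (x j)).smulRight (κ i)) with hTldef
  have hTl_apply : ∀ (g : C(Ω, ℝ)) (x' : Ω),
      Tl g x' = ∑ i, ∑ j, k x' (x i) * G⁻¹ i j * g (x j) := by
    intro g x'
    simp only [hTldef, ContinuousLinearMap.sum_apply, ContinuousLinearMap.smul_apply,
      ContinuousLinearMap.smulRight_apply, ContinuousMap.evalCLM, ContinuousMap.sum_apply,
      ContinuousMap.smul_apply, smul_eq_mul]
    refine Finset.sum_congr rfl fun i _ => ?_
    refine Finset.sum_congr rfl fun j _ => ?_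
    simp only [ContinuousLinearMap.comp_apply, hκdef]
    simp [BoundedContinuousFunction.evalCLM]
    ring
  -- the deterministic part
  set ca : C(Ω, ℝ) :=
    ⟨fun x' => (∑ i, ∑ j, k x' (x i) * G⁻¹ i j * f (x j)) - f x',
      ((continuous_finset_sum _ fun i _ => continuous_finset_sum _ fun j _ =>
        ((hκ i).mul continuous_const).mul continuous_const)).sub hf⟩ with hcadef
  have hca : ∀ x', ca x' = S 0 x' - f x' := by
    intro x'
    rw [hS]
    simp [hcadef]
  -- embedding into L²
  set ι : C(Ω, ℝ) →L[ℝ] Lp ℝ 2 μ := ContinuousMap.toLp 2 μ ℝ with hιdef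
  have key : ∀ h : C(Ω, ℝ), (∫ x', (h x') ^ 2 ∂μ) = ‖ι h‖ ^ 2 := by
    intro h
    rw [← real_inner_self_eq_norm_sq, MeasureTheory.L2.inner_def]
    refine integral_congr_ae ?_
    filter_upwards [ContinuousMap.coeFn_toLp (p := 2) μ (𝕜 := ℝ) h] with y hy
    rw [hιdef]
    rw [hy, RCLike.inner_apply, conj_trivial, pow_two]
  set Ψ : C(Ω, ℝ) →L[ℝ] Lp ℝ 2 μ := ι - ι.comp Tl with hΨdef
  set a : Lp ℝ 2 μ := ι ca with hadef
  -- pointwise identities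
  have h0 : (∫ x', (S 0 x' - f x') ^ 2 ∂μ) = ‖a‖ ^ 2 := by
    have hfe : (fun x' => (S 0 x' - f x') ^ 2) = fun x' => (ca x') ^ 2 :=
      funext fun x' => by rw [hca]
    calc (∫ x', (S 0 x' - f x') ^ 2 ∂μ) = ∫ x', (ca x') ^ 2 ∂μ := by rw [hfe]
      _ = ‖a‖ ^ 2 := key ca
  have hB : ∀ g : C(Ω, ℝ), (∫ x', (g x' - T g x') ^ 2 ∂μ) = ‖Ψ g‖ ^ 2 := by
    intro g
    have : Ψ g = ι (g - Tl g) := by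
      simp [hΨdef, map_sub]
    have hfe : (fun x' => (g x' - T g x') ^ 2) = fun x' => ((g - Tl g) x') ^ 2 := by
      funext x'
      rw [ContinuousMap.sub_apply, hTl_apply, hT]
    calc (∫ x', (g x' - T g x') ^ 2 ∂μ) = ∫ x', ((g - Tl g) x') ^ 2 ∂μ := by rw [hfe]
      _ = ‖ι (g - Tl g)‖ ^ 2 := key _
      _ = ‖Ψ g‖ ^ 2 := by rw [this]
  have hSW : ∀ g : C(Ω, ℝ), (∫ x', (S g x' - f x') ^ 2 ∂μ) = ‖a + Ψ g‖ ^ 2 := by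
    intro g
    have h1 : a + Ψ g = ι (ca + (g - Tl g)) := by
      simp [hΨdef, hadef, map_add, map_sub]
    have hfe : (fun x' => (S g x' - f x') ^ 2)
        = fun x' => ((ca + (g - Tl g)) x') ^ 2 := by
      funext x'
      congr 1
      rw [ContinuousMap.add_apply, ContinuousMap.sub_apply, hTl_apply, hca, hS 0, hS g]
      simp only [ContinuousMap.zero_apply, sub_zero, zero_add]
      simp only [mul_sub, Finset.sum_sub_distrib]
      ring
    calc (∫ x', (S g x' - f x') ^ 2 ∂μ) = ∫ x', ((ca + (g - Tl g)) x') ^ 2 ∂μ := by rw [hfe]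
      _ = ‖ι (ca + (g - Tl g))‖ ^ 2 := key _
      _ = ‖a + Ψ g‖ ^ 2 := by rw [h1]
  -- integrability over ω
  have hbind : Integrable (fun ω => Ψ (W ω)) P := Ψ.integrable_comp hWint
  have hbmean : (∫ ω, Ψ (W ω) ∂P) = 0 := by
    rw [ContinuousLinearMap.integral_comp_comm Ψ hWint, hWmean, map_zero]
  have hcross_int : Integrable (fun ω => (inner ℝ a (Ψ (W ω)) : ℝ)) P := by
    have := (innerSL ℝ a).integrable_comp hbind
    simpa using this
  have hcross : (∫ ω, (inner ℝ a (Ψ (W ω)) : ℝ) ∂P) = 0 := by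
    have h1 : (∫ ω, (innerSL ℝ a) (Ψ (W ω)) ∂P) = (innerSL ℝ a) (∫ ω, Ψ (W ω) ∂P) :=
      ContinuousLinearMap.integral_comp_comm _ hbind
    simpa [hbmean] using h1
  have hqint : Integrable (fun ω => ‖Ψ (W ω)‖ ^ 2) P := by
    refine Integrable.mono' (hWsq.const_mul (‖Ψ‖ ^ 2)) ?_ ?_
    · have hm := hbind.aestronglyMeasurable.norm
      have : (fun ω => ‖Ψ (W ω)‖ ^ 2) = fun ω => ‖Ψ (W ω)‖ * ‖Ψ (W ω)‖ := by
        funext ω; ring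
      rw [this]; exact hm.mul hm
    · refine Filter.Eventually.of_forall fun ω => ?_
      have h1 : ‖Ψ (W ω)‖ ≤ ‖Ψ‖ * ‖W ω‖ := Ψ.le_opNorm _
      have h2 : (0:ℝ) ≤ ‖Ψ (W ω)‖ := norm_nonneg _
      have h3 : (0:ℝ) ≤ ‖Ψ‖ * ‖W ω‖ := le_trans h2 h1
      rw [Real.norm_of_nonneg (by positivity)]
      calc ‖Ψ (W ω)‖ ^ 2 ≤ (‖Ψ‖ * ‖W ω‖) ^ 2 := by nlinarith
        _ = ‖Ψ‖ ^ 2 * ‖W ω‖ ^ 2 := by ring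
  -- main expectation computation
  have hmain : (∫ ω, (∫ x', (S (W ω) x' - f x') ^ 2 ∂μ) ∂P)
      = ‖a‖ ^ 2 + ∫ ω, ‖Ψ (W ω)‖ ^ 2 ∂P := by
    have h1 : (∫ ω, (∫ x', (S (W ω) x' - f x') ^ 2 ∂μ) ∂P)
        = ∫ ω, (‖a‖ ^ 2 + (2 * (inner ℝ a (Ψ (W ω)) : ℝ) + ‖Ψ (W ω)‖ ^ 2)) ∂P := by
      apply integral_congr_ae
      filter_upwards with ω
      rw [hSW (W ω), norm_add_sq_real]
      ring
    have hint2 : Integrable (fun ω => 2 * (inner ℝ a (Ψ (W ω)) : ℝ)) P :=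
      hcross_int.const_mul 2
    have hint3 : Integrable (fun ω => 2 * (inner ℝ a (Ψ (W ω)) : ℝ) + ‖Ψ (W ω)‖ ^ 2) P :=
      hint2.add hqint
    rw [h1, integral_add (integrable_const _) hint3, integral_add hint2 hqint,
      integral_const_mul 2 _, hcross, integral_const]
    simp
  have hqnonneg : (0:ℝ) ≤ ∫ ω, ‖Ψ (W ω)‖ ^ 2 ∂P :=
    integral_nonneg fun ω => sq_nonneg _
  constructor
  · rw [h0, hmain]; linarith
  · rw [h0, hmain]
    have hiff : (∫ ω, ‖Ψ (W ω)‖ ^ 2 ∂P) = 0 ↔ ∀ᵐ ω ∂P, ‖Ψ (W ω)‖ ^ 2 = 0 := by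
      rw [integral_eq_zero_iff_of_nonneg (fun ω => sq_nonneg _) hqint]
      constructor
      · intro h; filter_upwards [h] with ω hω; simpa using hω
      · intro h; filter_upwards [h] with ω hω; simpa using hω
    constructor
    · intro h
      have h2 : (∫ ω, ‖Ψ (W ω)‖ ^ 2 ∂P) = 0 := by linarith
      filter_upwards [hiff.mp h2] with ω hω
      rw [hB (W ω), hω]
    · intro h
      have h2 : ∀ᵐ ω ∂P, ‖Ψ (W ω)‖ ^ 2 = 0 := by
        filter_upwards [h] with ω hω
        rw [← hB (W ω)]; exact hω
      have := hiff.mpr h2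
      linarith
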